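/- Let n ≥ 1 and α, β > 0. Let L_{α,β,n} denote the set of spring-mass systems of size n with positive masses and positive spring constants satisfying K_1/√(m_1) = α and K_{n+1}/√(m_n) = β. Then the map sending a spring-mass system in L_{α,β,n} to its associated matrix H = M^{-1/2} B M^{-1/2} is a bijection from L_{α,β,n} onto T_{A,n}. -/

import Mathlib

open Matrix

/-- The stiffness matrix of a spring-mass system with spring constants `K 0, …, K n`
(`n × n`, tridiagonal, with `B j j = K j + K (j+1)` and off-diagonal entries `-K (j+1)`). -/
noncomputable def stiffB (n : ℕ) (K : Fin (n + 1) → ℝ) : Matrix (Fin n) (Fin n) ℝ :=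
  Matrix.of fun i j =>
    if (i : ℕ) = (j : ℕ) then K i.castSucc + K i.succ
    else if (i : ℕ) + 1 = (j : ℕ) then -K i.succ
    else if (j : ℕ) + 1 = (i : ℕ) then -K j.succ
    else 0

/-- The associated matrix `H = M^{-1/2} B M^{-1/2}` of a spring-mass system with
masses `m` and spring constants `K`. -/
noncomputable def assocH (n : ℕ) (m : Fin n → ℝ) (K : Fin (n + 1) → ℝ) :
    Matrix (Fin n) (Fin n) ℝ :=
  Matrix.diagonal (fun i => (Real.sqrt (m i))⁻¹) * stiffB n K *
    Matrix.diagonal (fun i => (Real.sqrt (m i))⁻¹)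

/-- A matrix is tridiagonal: entries vanish when the indices differ by more than one. -/
def IsTridiagonal {n : ℕ} (H : Matrix (Fin n) (Fin n) ℝ) : Prop :=
  ∀ i j : Fin n, ((i : ℕ) + 1 < (j : ℕ) ∨ (j : ℕ) + 1 < (i : ℕ)) → H i j = 0

/-- The set `T_{A,n}`: real symmetric tridiagonal matrices with negative sub- and
super-diagonal entries which are positive definite. -/
def MemTA {n : ℕ} (H : Matrix (Fin n) (Fin n) ℝ) : Prop :=
  H.IsSymm ∧ IsTridiagonal H ∧
    (∀ i j : Fin n, ((i : ℕ) + 1 = (j : ℕ) ∨ (j : ℕ) + 1 = (i : ℕ)) → H i j < 0) ∧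
    H.PosDef

namespace SpringMass

lemma assocH_apply (n : ℕ) (m : Fin n → ℝ) (K : Fin (n + 1) → ℝ) (i j : Fin n) :
    assocH n m K i j = (Real.sqrt (m i))⁻¹ * stiffB n K i j * (Real.sqrt (m j))⁻¹ := by
  simp [assocH, Matrix.mul_diagonal, Matrix.diagonal_mul]

lemma stiffB_tridiag (n : ℕ) (K : Fin (n+1) → ℝ) : IsTridiagonal (stiffB n K) := by
  intro i j h
  simp only [stiffB, Matrix.of_apply]
  rw [if_neg (by omega), if_neg (by omega), if_neg (by omega)]

lemma stiffB_symm (n : ℕ) (K : Fin (n+1) → ℝ) : (stiffB n K).IsSymm := by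
  ext i j
  show stiffB n K j i = stiffB n K i j
  simp only [stiffB, Matrix.of_apply]
  split_ifs <;>
    first
      | rfl
      | (exfalso; omega)
      | (obtain rfl : i = j := Fin.ext (by omega); rfl)

lemma tridiag_sum {n : ℕ} {H : Matrix (Fin n) (Fin n) ℝ} (hH : IsTridiagonal H)
    (s : Fin n → ℝ) (i : Fin n) :
    ∑ j, H i j * s j =
      (if h : 0 < (i : ℕ) then H i ⟨(i:ℕ)-1, by omega⟩ * s ⟨(i:ℕ)-1, by omega⟩ else 0) +
      H i i * s i +
      (if h : (i:ℕ)+1 < n then H i ⟨(i:ℕ)+1, h⟩ * s ⟨(i:ℕ)+1, h⟩ else 0) := by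
  have key : ∀ j : Fin n, H i j * s j =
      (if (j:ℕ)+1 = (i:ℕ) then H i j * s j else 0) +
      (if j = i then H i j * s j else 0) +
      (if (i:ℕ)+1 = (j:ℕ) then H i j * s j else 0) := by
    intro j
    by_cases e2 : j = i
    · subst e2
      simp
    · have e2' : ¬ (j:ℕ) = (i:ℕ) := fun h => e2 (Fin.ext h)
      by_cases e1 : (j:ℕ)+1 = (i:ℕ)
      · rw [if_pos e1, if_neg e2, if_neg (show ¬((i:ℕ)+1 = (j:ℕ)) by omega)]; ring
      · by_cases e3 : (i:ℕ)+1 = (j:ℕ)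
        · rw [if_neg e1, if_neg e2, if_pos e3]; ring
        · rw [if_neg e1, if_neg e2, if_neg e3, hH i j (by omega)]; ring
  rw [Finset.sum_congr rfl (fun j _ => key j)]
  rw [Finset.sum_add_distrib, Finset.sum_add_distrib]
  congr 1
  · congr 1
    · by_cases h : 0 < (i : ℕ)
      · rw [dif_pos h]
        have hc : ∀ j : Fin n, ((j:ℕ)+1 = (i:ℕ)) ↔ (j = ⟨(i:ℕ)-1, by omega⟩) := by
          intro j
          simp only [Fin.ext_iff]
          constructor <;> intro hh <;> simp_all <;> omega
        rw [Finset.sum_congr rfl (fun j _ => by rw [if_congr (hc j) rfl rfl])]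
        rw [Finset.sum_ite_eq']
        simp
      · rw [dif_neg h]
        exact Finset.sum_eq_zero (fun j _ => if_neg (by omega))
    · simp [Finset.sum_ite_eq']
  · by_cases h : (i:ℕ)+1 < n
    · rw [dif_pos h]
      have hc : ∀ j : Fin n, ((i:ℕ)+1 = (j:ℕ)) ↔ (j = ⟨(i:ℕ)+1, h⟩) := by
        intro j
        simp only [Fin.ext_iff]
        constructor <;> intro hh <;> simp_all
      rw [Finset.sum_congr rfl (fun j _ => by rw [if_congr (hc j) rfl rfl])]
      rw [Finset.sum_ite_eq']
      simp
    · rw [dif_neg h]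
      exact Finset.sum_eq_zero (fun j _ => if_neg (by omega))

def incE (n : ℕ) : Matrix (Fin (n+1)) (Fin n) ℝ :=
  Matrix.of fun j i => (if (j : ℕ) = (i : ℕ) then 1 else 0) - (if (j : ℕ) = (i : ℕ) + 1 then 1 else 0)

lemma delta_sum (n : ℕ) (K : Fin (n+1) → ℝ) (u v : Fin (n+1)) :
    ∑ j : Fin (n+1), (if j = u then (1:ℝ) else 0) * (if j = v then (1:ℝ) else 0) * K j
      = if u = v then K u else 0 := by
  by_cases h : u = v
  · subst h
    simp [Finset.sum_ite_eq', mul_comm]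
  · rw [if_neg h]
    apply Finset.sum_eq_zero
    intro j _
    by_cases h1 : j = u
    · subst h1; rw [if_neg (fun hh => h hh)]; ring
    · rw [if_neg h1]; ring

lemma stiffB_eq (n : ℕ) (K : Fin (n+1) → ℝ) :
    stiffB n K = (incE n)ᵀ * Matrix.diagonal K * incE n := by
  ext i i'
  rw [Matrix.mul_assoc]
  rw [Matrix.mul_apply]
  have expand : ∀ j : Fin (n+1), (incE n)ᵀ i j * (Matrix.diagonal K * incE n) j i'
      = ((if j = i.castSucc then (1:ℝ) else 0) - (if j = i.succ then (1:ℝ) else 0)) *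
        ((if j = i'.castSucc then (1:ℝ) else 0) - (if j = i'.succ then (1:ℝ) else 0)) * K j := by
    intro j
    rw [Matrix.transpose_apply, Matrix.diagonal_mul]
    simp only [incE, Matrix.of_apply]
    have c1 : ((j:ℕ) = (i:ℕ)) = (j = i.castSucc) := by
      simp [Fin.ext_iff]
    have c2 : ((j:ℕ) = (i:ℕ)+1) = (j = i.succ) := by
      simp [Fin.ext_iff]
    have c3 : ((j:ℕ) = (i':ℕ)) = (j = i'.castSucc) := by
      simp [Fin.ext_iff]
    have c4 : ((j:ℕ) = (i':ℕ)+1) = (j = i'.succ) := by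
      simp [Fin.ext_iff]
    simp only [c1, c2, c3, c4]
    ring
  rw [Finset.sum_congr rfl (fun j _ => expand j)]
  have expand2 : ∀ j : Fin (n+1),
      ((if j = i.castSucc then (1:ℝ) else 0) - (if j = i.succ then (1:ℝ) else 0)) *
        ((if j = i'.castSucc then (1:ℝ) else 0) - (if j = i'.succ then (1:ℝ) else 0)) * K j
      = (if j = i.castSucc then (1:ℝ) else 0) * (if j = i'.castSucc then (1:ℝ) else 0) * K j
        - (if j = i.castSucc then (1:ℝ) else 0) * (if j = i'.succ then (1:ℝ) else 0) * K j
        - (if j = i.succ then (1:ℝ) else 0) * (if j = i'.castSucc then (1:ℝ) else 0) * K j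
        + (if j = i.succ then (1:ℝ) else 0) * (if j = i'.succ then (1:ℝ) else 0) * K j := by
    intro j; ring
  rw [Finset.sum_congr rfl (fun j _ => expand2 j)]
  simp only [Finset.sum_add_distrib, Finset.sum_sub_distrib]
  rw [delta_sum, delta_sum, delta_sum, delta_sum]
  have hcc : (i.castSucc = i'.castSucc) ↔ ((i:ℕ) = (i':ℕ)) := by simp [Fin.ext_iff]
  have hcs : (i.castSucc = i'.succ) ↔ ((i:ℕ) = (i':ℕ)+1) := by simp [Fin.ext_iff]
  have hsc : (i.succ = i'.castSucc) ↔ ((i:ℕ)+1 = (i':ℕ)) := by simp [Fin.ext_iff]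
  have hss : (i.succ = i'.succ) ↔ ((i:ℕ) = (i':ℕ)) := by simp [Fin.ext_iff]
  simp only [stiffB, Matrix.of_apply]
  by_cases h : (i:ℕ) = (i':ℕ)
  · rw [if_pos h, if_pos (hcc.mpr h), if_pos (hss.mpr h),
      if_neg (fun hh => by have := hcs.mp hh; omega),
      if_neg (fun hh => by have := hsc.mp hh; omega)]
    ring
  · rw [if_neg h,
      if_neg (show ¬i.castSucc = i'.castSucc from fun hh => h (hcc.mp hh)),
      if_neg (show ¬i.succ = i'.succ from fun hh => h (hss.mp hh))]
    by_cases h2 : (i:ℕ)+1 = (i':ℕ)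
    · rw [if_pos h2, if_pos (hsc.mpr h2),
        if_neg (show ¬i.castSucc = i'.succ from fun hh => by have := hcs.mp hh; omega)]
      ring
    · rw [if_neg h2, if_neg (show ¬i.succ = i'.castSucc from fun hh => h2 (hsc.mp hh))]
      by_cases h3 : (i':ℕ)+1 = (i:ℕ)
      · rw [if_pos h3, if_pos (hcs.mpr h3.symm)]
        have : K i.castSucc = K i'.succ := congrArg K (Fin.ext (by simp; omega))
        rw [this]; ring
      · rw [if_neg h3,
          if_neg (show ¬i.castSucc = i'.succ from fun hh => by have := hcs.mp hh; omega)]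
        ring

lemma incE_mulVec (n : ℕ) (x : Fin n → ℝ) (j : Fin (n+1)) :
    (incE n *ᵥ x) j = (if h : (j:ℕ) < n then x ⟨j, h⟩ else 0)
      - (if h : 0 < (j:ℕ) then x ⟨(j:ℕ)-1, by omega⟩ else 0) := by
  simp only [mulVec, dotProduct, incE, Matrix.of_apply]
  have expand : ∀ i : Fin n,
      ((if (j:ℕ) = (i:ℕ) then (1:ℝ) else 0) - (if (j:ℕ) = (i:ℕ)+1 then 1 else 0)) * x i
      = (if (j:ℕ) = (i:ℕ) then x i else 0) - (if (j:ℕ) = (i:ℕ)+1 then x i else 0) := by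
    intro i; split_ifs <;> ring
  rw [Finset.sum_congr rfl (fun i _ => expand i), Finset.sum_sub_distrib]
  congr 1
  · by_cases h : (j:ℕ) < n
    · rw [dif_pos h]
      have hc : ∀ i : Fin n, ((j:ℕ) = (i:ℕ)) ↔ (i = ⟨(j:ℕ), h⟩) := by
        intro i; simp [Fin.ext_iff]; constructor <;> omega
      rw [Finset.sum_congr rfl (fun i _ => by rw [if_congr (hc i) rfl rfl]), Finset.sum_ite_eq']
      simp
    · rw [dif_neg h]
      exact Finset.sum_eq_zero (fun i _ => if_neg (by omega))
  · by_cases h : 0 < (j:ℕ)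
    · rw [dif_pos h]
      have hn : (j:ℕ)-1 < n := by omega
      have hc : ∀ i : Fin n, ((j:ℕ) = (i:ℕ)+1) ↔ (i = ⟨(j:ℕ)-1, hn⟩) := by
        intro i; simp [Fin.ext_iff]; constructor <;> omega
      rw [Finset.sum_congr rfl (fun i _ => by rw [if_congr (hc i) rfl rfl]), Finset.sum_ite_eq']
      simp
    · rw [dif_neg h]
      exact Finset.sum_eq_zero (fun i _ => if_neg (by omega))

lemma incE_ker (n : ℕ) (x : Fin n → ℝ) (hx : incE n *ᵥ x = 0) : x = 0 := by
  funext i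
  show x i = 0
  obtain ⟨k, hk⟩ := i
  induction k with
  | zero =>
    have h0 := congrFun hx ⟨0, by omega⟩
    rw [incE_mulVec] at h0
    rw [dif_pos hk, dif_neg (by simp)] at h0
    simpa using h0
  | succ k ih =>
    have h0 := congrFun hx ⟨k+1, by omega⟩
    rw [incE_mulVec] at h0
    rw [dif_pos (show ((⟨k+1, by omega⟩ : Fin (n+1)):ℕ) < n from hk),
      dif_pos (by simp)] at h0
    simp only [Pi.zero_apply] at h0
    have hxk : x ⟨k, by omega⟩ = 0 := ih (by omega)
    have : x ⟨k+1, hk⟩ - x ⟨k, by omega⟩ = 0 := by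
      convert h0 using 3
      simp
    rw [hxk] at this
    linarith

lemma stiffB_quadform (n : ℕ) (K : Fin (n+1) → ℝ) (x : Fin n → ℝ) :
    x ⬝ᵥ (stiffB n K *ᵥ x) = ∑ j, K j * ((incE n *ᵥ x) j)^2 := by
  rw [stiffB_eq, Matrix.mul_assoc, ← Matrix.mulVec_mulVec, Matrix.dotProduct_mulVec,
    Matrix.vecMul_transpose, ← Matrix.mulVec_mulVec]
  simp only [dotProduct, Matrix.mulVec_diagonal]
  exact Finset.sum_congr rfl (fun j _ => by ring)

lemma stiffB_posDef (n : ℕ) (K : Fin (n+1) → ℝ) (hK : ∀ j, 0 < K j) :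
    (stiffB n K).PosDef := by
  refine Matrix.PosDef.of_dotProduct_mulVec_pos (stiffB_symm n K) (fun x hx => ?_)
  have hy : incE n *ᵥ x ≠ 0 := fun h => hx (incE_ker n x h)
  have hq : x ⬝ᵥ (stiffB n K *ᵥ x) = ∑ j, K j * ((incE n *ᵥ x) j)^2 := stiffB_quadform n K x
  have hpos : 0 < ∑ j, K j * ((incE n *ᵥ x) j)^2 := by
    obtain ⟨j0, hj0⟩ : ∃ j0, (incE n *ᵥ x) j0 ≠ 0 := by
      by_contra h
      push_neg at h
      exact hy (funext h)
    apply Finset.sum_pos' (fun j _ => mul_nonneg (hK j).le (sq_nonneg _))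
    exact ⟨j0, Finset.mem_univ _, mul_pos (hK j0) (by positivity)⟩
  simpa [hq] using hpos

end SpringMass

namespace SpringMass

variable {n : ℕ}

lemma sqrt_pos_of_pos {m : Fin n → ℝ} (hm : ∀ i, 0 < m i) (i : Fin n) :
    0 < Real.sqrt (m i) := Real.sqrt_pos.mpr (hm i)

lemma assocH_symm (m : Fin n → ℝ) (K : Fin (n+1) → ℝ) : (assocH n m K).IsSymm := by
  ext i j
  show assocH n m K j i = assocH n m K i j
  rw [assocH_apply, assocH_apply]
  have : stiffB n K j i = stiffB n K i j := congrFun (congrFun (stiffB_symm n K) i) j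
  rw [this]; ring

lemma assocH_tridiag (m : Fin n → ℝ) (K : Fin (n+1) → ℝ) : IsTridiagonal (assocH n m K) := by
  intro i j h
  rw [assocH_apply, stiffB_tridiag n K i j h]
  ring

lemma assocH_offdiag_neg (m : Fin n → ℝ) (K : Fin (n+1) → ℝ)
    (hm : ∀ i, 0 < m i) (hK : ∀ j, 0 < K j) (i j : Fin n)
    (h : (i:ℕ) + 1 = (j:ℕ) ∨ (j:ℕ) + 1 = (i:ℕ)) : assocH n m K i j < 0 := by
  rw [assocH_apply]
  have hBneg : stiffB n K i j < 0 := by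
    simp only [stiffB, Matrix.of_apply]
    rcases h with h | h
    · rw [if_neg (by omega), if_pos h]
      simpa using hK i.succ
    · rw [if_neg (by omega), if_neg (by omega), if_pos h]
      simpa using hK j.succ
  have h1 : 0 < (Real.sqrt (m i))⁻¹ := inv_pos.mpr (sqrt_pos_of_pos hm i)
  have h2 : 0 < (Real.sqrt (m j))⁻¹ := inv_pos.mpr (sqrt_pos_of_pos hm j)
  have := mul_pos (mul_pos h1 (neg_pos.mpr hBneg)) h2
  nlinarith

lemma assocH_posDef (m : Fin n → ℝ) (K : Fin (n+1) → ℝ)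
    (hm : ∀ i, 0 < m i) (hK : ∀ j, 0 < K j) : (assocH n m K).PosDef := by
  refine Matrix.PosDef.of_dotProduct_mulVec_pos (assocH_symm m K) (fun x hx => ?_)
  set d : Fin n → ℝ := fun i => (Real.sqrt (m i))⁻¹ with hd
  have hdpos : ∀ i, 0 < d i := fun i => inv_pos.mpr (sqrt_pos_of_pos hm i)
  set y : Fin n → ℝ := fun i => d i * x i with hy
  have hyx : Matrix.diagonal d *ᵥ x = y := by
    funext i; rw [Matrix.mulVec_diagonal]
  have hy0 : y ≠ 0 := by
    intro h
    apply hx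
    funext i
    have := congrFun h i
    simp only [hy, Pi.zero_apply] at this
    have : x i = 0 := by
      rcases mul_eq_zero.mp this with h' | h'
      · exact absurd h' (ne_of_gt (hdpos i))
      · exact h'
    simpa using this
  have hquad : x ⬝ᵥ (assocH n m K *ᵥ x) = y ⬝ᵥ (stiffB n K *ᵥ y) := by
    rw [assocH, Matrix.mul_assoc, ← Matrix.mulVec_mulVec, ← Matrix.mulVec_mulVec,
      hyx, Matrix.dotProduct_mulVec x (Matrix.diagonal d)]
    congr 1
    funext i
    rw [Matrix.vecMul_diagonal]
    rw [← hyx, Matrix.mulVec_diagonal]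
    ring
  have := (stiffB_posDef n K hK).dotProduct_mulVec_pos hy0
  simp only [star_trivial] at this ⊢
  rw [hquad]
  exact this

lemma memTA_assocH (m : Fin n → ℝ) (K : Fin (n+1) → ℝ)
    (hm : ∀ i, 0 < m i) (hK : ∀ j, 0 < K j) : MemTA (assocH n m K) :=
  ⟨assocH_symm m K, assocH_tridiag m K, assocH_offdiag_neg m K hm hK,
    assocH_posDef m K hm hK⟩

lemma stiffB_rowsum (hn : 1 ≤ n) (K : Fin (n+1) → ℝ) (i : Fin n) :
    ∑ j, stiffB n K i j =
      (if (i:ℕ) = 0 then K 0 else 0) + (if (i:ℕ) = n-1 then K (Fin.last n) else 0) := by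
  have h := tridiag_sum (stiffB_tridiag n K) (fun _ => (1:ℝ)) i
  simp only [mul_one] at h
  rw [h]
  have hdiag : stiffB n K i i = K i.castSucc + K i.succ := by
    simp [stiffB]
  by_cases h1 : 0 < (i:ℕ)
  · have hsub : stiffB n K i ⟨(i:ℕ)-1, by omega⟩ = -K i.castSucc := by
      simp only [stiffB, Matrix.of_apply]
      rw [if_neg (by omega), if_neg (by omega), if_pos (by omega)]
      congr 1
      exact congrArg K (Fin.ext (by simp [Fin.ext_iff]; omega))
    rw [dif_pos h1, hsub, hdiag, if_neg (by omega)]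
    by_cases h2 : (i:ℕ)+1 < n
    · have hsup : stiffB n K i ⟨(i:ℕ)+1, h2⟩ = -K i.succ := by
        simp only [stiffB, Matrix.of_apply]
        rw [if_neg (by simp), if_pos (by simp)]
      rw [dif_pos h2, hsup, if_neg (by omega)]
      ring
    · have hlast : (i:ℕ) = n-1 := by omega
      rw [dif_neg h2, if_pos hlast]
      have : K i.succ = K (Fin.last n) := congrArg K (Fin.ext (by simp [Fin.ext_iff]; omega))
      rw [this]; ring
  · have h0 : (i:ℕ) = 0 := by omega
    have hK0 : K i.castSucc = K 0 := congrArg K (Fin.ext (by simp [Fin.ext_iff]; omega))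
    rw [dif_neg h1, hdiag, if_pos h0, hK0]
    by_cases h2 : (i:ℕ)+1 < n
    · have hsup : stiffB n K i ⟨(i:ℕ)+1, h2⟩ = -K i.succ := by
        simp only [stiffB, Matrix.of_apply]
        rw [if_neg (by simp), if_pos (by simp)]
      rw [dif_pos h2, hsup, if_neg (by omega)]
      ring
    · have hlast : (i:ℕ) = n-1 := by omega
      rw [dif_neg h2, if_pos hlast]
      have : K i.succ = K (Fin.last n) := congrArg K (Fin.ext (by simp [Fin.ext_iff]; omega))
      rw [this]; ring

/-- For a spring-mass system, `H √m = (K 0/√m 0) e₀ + (K (last)/√m (n-1)) e_{n-1}`. -/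
lemma assocH_mulVec_sqrt (hn : 1 ≤ n) (m : Fin n → ℝ) (K : Fin (n+1) → ℝ)
    (hm : ∀ i, 0 < m i) :
    assocH n m K *ᵥ (fun i => Real.sqrt (m i)) = fun i : Fin n =>
      (if (i:ℕ) = 0 then K 0 * (Real.sqrt (m i))⁻¹ else 0) +
      (if (i:ℕ) = n-1 then K (Fin.last n) * (Real.sqrt (m i))⁻¹ else 0) := by
  funext i
  show ∑ j, assocH n m K i j * Real.sqrt (m j) = _
  have step : ∀ j, assocH n m K i j * Real.sqrt (m j)
      = (Real.sqrt (m i))⁻¹ * stiffB n K i j := by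
    intro j
    rw [assocH_apply, mul_assoc,
      inv_mul_cancel₀ (ne_of_gt (sqrt_pos_of_pos hm j)), mul_one]
  rw [Finset.sum_congr rfl (fun j _ => step j), ← Finset.mul_sum,
    stiffB_rowsum hn K i]
  split_ifs <;> ring

end SpringMass

namespace SpringMass

variable {n : ℕ}

lemma offdiag_nonpos {H : Matrix (Fin n) (Fin n) ℝ} (hTA : MemTA H) :
    ∀ i j : Fin n, i ≠ j → H i j ≤ 0 := by
  obtain ⟨hsym, htri, hneg, hpd⟩ := hTA
  intro i j hij
  have hij' : (i:ℕ) ≠ (j:ℕ) := fun h => hij (Fin.ext h)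
  by_cases h : (i:ℕ) + 1 = (j:ℕ) ∨ (j:ℕ) + 1 = (i:ℕ)
  · exact (hneg i j h).le
  · push_neg at h
    exact (htri i j (by omega)).le

lemma mulVec_pos (hn : 0 < n) {H : Matrix (Fin n) (Fin n) ℝ} (hTA : MemTA H)
    {s c : Fin n → ℝ} (hHs : H *ᵥ s = c) (hc : ∀ i, 0 ≤ c i)
    (hc0 : 0 < c ⟨0, hn⟩) : ∀ i, 0 < s i := by
  have hoff := offdiag_nonpos hTA
  obtain ⟨hsym, htri, hneg, hpd⟩ := hTA
  have hmv : ∀ (v : Fin n → ℝ) (i : Fin n), (H *ᵥ v) i = ∑ j, H i j * v j := fun v i => rfl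
  -- nonnegativity of s
  set y : Fin n → ℝ := fun i => min (s i) 0 with hy
  have hy_le : ∀ i, y i ≤ 0 := fun i => min_le_right _ _
  have hy_s : ∀ i, y i ≤ s i := fun i => min_le_left _ _
  have hprod : ∀ i, y i * (s i - y i) = 0 := by
    intro i
    rcases le_total (s i) 0 with h | h
    · simp [hy, min_eq_left h]
    · simp [hy, min_eq_right h]
  have hsy : ∀ i, 0 ≤ s i - y i := fun i => sub_nonneg.mpr (hy_s i)
  have hdec : y ⬝ᵥ (H *ᵥ y) = y ⬝ᵥ c - y ⬝ᵥ (H *ᵥ (fun i => s i - y i)) := by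
    have hsplit : H *ᵥ s = H *ᵥ y + H *ᵥ (fun i => s i - y i) := by
      have he : (fun i => s i - y i) = s - y := rfl
      rw [he, ← Matrix.mulVec_add, add_comm, sub_add_cancel]
    rw [← hHs, hsplit, dotProduct_add]
    ring
  have h1 : y ⬝ᵥ c ≤ 0 := by
    apply Finset.sum_nonpos
    intro i _
    have h1 := hy_le i; have h2 := hc i
    nlinarith
  have h2 : 0 ≤ y ⬝ᵥ (H *ᵥ (fun i => s i - y i)) := by
    simp only [dotProduct, mulVec]
    apply Finset.sum_nonneg
    intro i _
    rw [Finset.mul_sum]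
    apply Finset.sum_nonneg
    intro j _
    by_cases hij : i = j
    · subst hij
      have : y i * (H i i * (s i - y i)) = H i i * (y i * (s i - y i)) := by ring
      rw [this, hprod i, mul_zero]
    · have ha := hoff i j hij
      have hb := hy_le i
      have hcc := hsy j
      nlinarith [mul_nonneg (mul_nonneg (neg_nonneg.2 hb) (neg_nonneg.2 ha)) hcc]
  have hyHy : y ⬝ᵥ (H *ᵥ y) ≤ 0 := by rw [hdec]; linarith
  have hy0 : y = 0 := by
    by_contra h
    have := hpd.dotProduct_mulVec_pos h
    have h3 : (0:ℝ) < y ⬝ᵥ (H *ᵥ y) := by simpa using this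
    linarith
  have hs_nonneg : ∀ i, 0 ≤ s i := by
    intro i
    have h0 := congrFun hy0 i
    simp only [hy, Pi.zero_apply] at h0
    rcases le_total (s i) 0 with h | h
    · rw [min_eq_left h] at h0; linarith
    · exact h
  -- strict positivity
  intro i
  obtain ⟨k, hk⟩ := i
  induction k with
  | zero =>
    by_contra hle
    push_neg at hle
    have hs0 : s ⟨0, hk⟩ = 0 := le_antisymm hle (hs_nonneg _)
    have hrow := congrFun hHs ⟨0, hk⟩
    rw [hmv] at hrow
    have hsum : ∑ j, H ⟨0, hk⟩ j * s j ≤ 0 := by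
      apply Finset.sum_nonpos
      intro j _
      by_cases hj : j = ⟨0, hk⟩
      · subst hj; rw [hs0, mul_zero]
      · have ha := hoff ⟨0, hk⟩ j (fun h => hj h.symm)
        have hb := hs_nonneg j
        nlinarith [mul_nonneg (neg_nonneg.2 ha) hb]
    have : c ⟨0, hk⟩ = c ⟨0, hn⟩ := rfl
    linarith [hc0, hrow, hsum, this.ge]
  | succ k ih =>
    have hk' : k < n := by omega
    have hsk : 0 < s ⟨k, hk'⟩ := ih hk'
    by_contra hle
    push_neg at hle
    have hs1 : s ⟨k+1, hk⟩ = 0 := le_antisymm hle (hs_nonneg _)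
    have hrow := congrFun hHs ⟨k+1, hk⟩
    rw [hmv] at hrow
    have hbound : ∑ j, H ⟨k+1, hk⟩ j * s j ≤ H ⟨k+1, hk⟩ ⟨k, hk'⟩ * s ⟨k, hk'⟩ := by
      have hterm : ∀ j : Fin n, H ⟨k+1, hk⟩ j * s j ≤
          (if j = ⟨k, hk'⟩ then H ⟨k+1, hk⟩ ⟨k, hk'⟩ * s ⟨k, hk'⟩ else 0) := by
        intro j
        by_cases hj : j = ⟨k, hk'⟩
        · subst hj; rw [if_pos rfl]
        · rw [if_neg hj]
          by_cases hj2 : j = ⟨k+1, hk⟩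
          · subst hj2; rw [hs1, mul_zero]
          · have ha := hoff ⟨k+1, hk⟩ j (fun h => hj2 h.symm)
            have hb := hs_nonneg j
            nlinarith [mul_nonneg (neg_nonneg.2 ha) hb]
      calc ∑ j, H ⟨k+1, hk⟩ j * s j
          ≤ ∑ j, (if j = ⟨k, hk'⟩ then H ⟨k+1, hk⟩ ⟨k, hk'⟩ * s ⟨k, hk'⟩ else 0) :=
            Finset.sum_le_sum (fun j _ => hterm j)
        _ = H ⟨k+1, hk⟩ ⟨k, hk'⟩ * s ⟨k, hk'⟩ := by rw [Finset.sum_ite_eq']; simp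
    have hneg' : H ⟨k+1, hk⟩ ⟨k, hk'⟩ < 0 := hneg _ _ (Or.inr (by simp))
    have hcpos := hc ⟨k+1, hk⟩
    nlinarith [mul_neg_of_neg_of_pos hneg' hsk]

end SpringMass

open SpringMass

/-- The map sending a spring-mass system in `L_{α,β,n}` (positive masses and spring constants
with `K_1/√(m_1) = α`, `K_{n+1}/√(m_n) = β`) to its associated matrix is a bijection from
`L_{α,β,n}` onto `T_{A,n}`. -/
theorem assocH_bijOn (n : ℕ) (hn : 1 ≤ n) (α β : ℝ) (hα : 0 < α) (hβ : 0 < β) :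
    Set.BijOn (fun p : (Fin n → ℝ) × (Fin (n + 1) → ℝ) => assocH n p.1 p.2)
      {p : (Fin n → ℝ) × (Fin (n + 1) → ℝ) |
        (∀ i, 0 < p.1 i) ∧ (∀ j, 0 < p.2 j) ∧
        p.2 0 / Real.sqrt (p.1 ⟨0, by omega⟩) = α ∧
        p.2 (Fin.last n) / Real.sqrt (p.1 ⟨n - 1, by omega⟩) = β}
      {H : Matrix (Fin n) (Fin n) ℝ | MemTA H} := by
  have hn0 : 0 < n := hn
  -- the target vector
  set cf : Fin n → ℝ := fun i => (if (i:ℕ) = 0 then α else 0) + (if (i:ℕ) = n-1 then β else 0)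
    with hcf
  -- any system in L has H √m = cf
  have hkey : ∀ p : (Fin n → ℝ) × (Fin (n + 1) → ℝ),
      (∀ i, 0 < p.1 i) → (∀ j, 0 < p.2 j) →
      p.2 0 / Real.sqrt (p.1 ⟨0, by omega⟩) = α →
      p.2 (Fin.last n) / Real.sqrt (p.1 ⟨n - 1, by omega⟩) = β →
      assocH n p.1 p.2 *ᵥ (fun i => Real.sqrt (p.1 i)) = cf := by
    intro p hm hK hA hB
    rw [assocH_mulVec_sqrt hn p.1 p.2 hm]
    funext i
    rw [hcf]
    congr 1
    · by_cases h : (i:ℕ) = 0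
      · rw [if_pos h, if_pos h]
        have : i = ⟨0, by omega⟩ := Fin.ext h
        rw [this, ← hA, div_eq_mul_inv]
      · rw [if_neg h, if_neg h]
    · by_cases h : (i:ℕ) = n-1
      · rw [if_pos h, if_pos h]
        have : i = ⟨n-1, by omega⟩ := Fin.ext h
        rw [this, ← hB, div_eq_mul_inv]
      · rw [if_neg h, if_neg h]
  constructor
  · -- MapsTo
    intro p hp
    exact memTA_assocH p.1 p.2 hp.1 hp.2.1
  constructor
  · -- InjOn
    intro p hp q hq heq
    obtain ⟨hpm, hpK, hpA, hpB⟩ := hp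
    obtain ⟨hqm, hqK, hqA, hqB⟩ := hq
    simp only at heq
    have hTA := memTA_assocH p.1 p.2 hpm hpK
    have hdet : IsUnit (assocH n p.1 p.2).det :=
      isUnit_iff_ne_zero.mpr (ne_of_gt hTA.2.2.2.det_pos)
    have hp1 : assocH n p.1 p.2 *ᵥ (fun i => Real.sqrt (p.1 i)) = cf :=
      hkey p hpm hpK hpA hpB
    have hq1 : assocH n p.1 p.2 *ᵥ (fun i => Real.sqrt (q.1 i)) = cf := by
      rw [heq]; exact hkey q hqm hqK hqA hqB
    have hsqrt_eq : (fun i => Real.sqrt (p.1 i)) = (fun i => Real.sqrt (q.1 i)) := by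
      have e1 : (fun i => Real.sqrt (p.1 i))
          = (assocH n p.1 p.2)⁻¹ *ᵥ (assocH n p.1 p.2 *ᵥ (fun i => Real.sqrt (p.1 i))) := by
        rw [Matrix.mulVec_mulVec, Matrix.nonsing_inv_mul _ hdet, Matrix.one_mulVec]
      have e2 : (fun i => Real.sqrt (q.1 i))
          = (assocH n p.1 p.2)⁻¹ *ᵥ (assocH n p.1 p.2 *ᵥ (fun i => Real.sqrt (q.1 i))) := by
        rw [Matrix.mulVec_mulVec, Matrix.nonsing_inv_mul _ hdet, Matrix.one_mulVec]
      rw [e1, e2, hp1, hq1]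
    have hm_eq : p.1 = q.1 := by
      funext i
      have h := congrFun hsqrt_eq i
      calc p.1 i = Real.sqrt (p.1 i) ^ 2 := (Real.sq_sqrt (hpm i).le).symm
        _ = Real.sqrt (q.1 i) ^ 2 := by rw [h]
        _ = q.1 i := Real.sq_sqrt (hqm i).le
    have hK_eq : p.2 = q.2 := by
      funext j
      by_cases hj0 : (j:ℕ) = 0
      · have hj : j = 0 := Fin.ext (by simpa using hj0)
        subst hj
        have e1 : p.2 0 = α * Real.sqrt (p.1 ⟨0, by omega⟩) := by
          rw [← hpA]
          have hne := (sqrt_pos_of_pos hpm ⟨0, by omega⟩).ne'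
          field_simp
        have e2 : q.2 0 = α * Real.sqrt (q.1 ⟨0, by omega⟩) := by
          rw [← hqA]
          have hne := (sqrt_pos_of_pos hqm ⟨0, by omega⟩).ne'
          field_simp
        rw [e1, e2, hm_eq]
      · by_cases hjn : (j:ℕ) = n
        · have hj : j = Fin.last n := Fin.ext (by simpa using hjn)
          subst hj
          have e1 : p.2 (Fin.last n) = β * Real.sqrt (p.1 ⟨n-1, by omega⟩) := by
            rw [← hpB]
            have hne := (sqrt_pos_of_pos hpm ⟨n-1, by omega⟩).ne'
            field_simp
          have e2 : q.2 (Fin.last n) = β * Real.sqrt (q.1 ⟨n-1, by omega⟩) := by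
            rw [← hqB]
            have hne := (sqrt_pos_of_pos hqm ⟨n-1, by omega⟩).ne'
            field_simp
          rw [e1, e2, hm_eq]
        · -- middle spring constant, read off the off-diagonal entry
          have hjlt : (j:ℕ) < n := by have := j.isLt; omega
          have hj1 : 0 < (j:ℕ) := by omega
          set i1 : Fin n := ⟨(j:ℕ)-1, by omega⟩ with hi1
          set i2 : Fin n := ⟨(j:ℕ), hjlt⟩ with hi2
          have hadj : (i1:ℕ) + 1 = (i2:ℕ) := by simp [hi1, hi2]; omega
          have hsucc : i1.succ = j := Fin.ext (by simp [hi1]; omega)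
          have hstiffp : stiffB n p.2 i1 i2 = -p.2 j := by
            simp only [stiffB, Matrix.of_apply]
            rw [if_neg (by omega), if_pos hadj, hsucc]
          have hstiffq : stiffB n q.2 i1 i2 = -q.2 j := by
            simp only [stiffB, Matrix.of_apply]
            rw [if_neg (by omega), if_pos hadj, hsucc]
          have e := congrFun (congrFun heq i1) i2
          rw [assocH_apply, assocH_apply, hstiffp, hstiffq, hm_eq] at e
          have h1 : (Real.sqrt (q.1 i1))⁻¹ ≠ 0 :=
            inv_ne_zero (ne_of_gt (sqrt_pos_of_pos hqm i1))
          have h2 : (Real.sqrt (q.1 i2))⁻¹ ≠ 0 :=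
            inv_ne_zero (ne_of_gt (sqrt_pos_of_pos hqm i2))
          have := mul_right_cancel₀ h2 e
          have := mul_left_cancel₀ h1 this
          exact neg_injective this
    exact Prod.ext hm_eq hK_eq
  · -- SurjOn
    intro H hTA
    obtain ⟨hsym, htri, hneg, hpd⟩ := hTA
    have hdet : IsUnit H.det := isUnit_iff_ne_zero.mpr (ne_of_gt hpd.det_pos)
    set s : Fin n → ℝ := H⁻¹ *ᵥ cf with hs
    have hHs : H *ᵥ s = cf := by
      rw [hs, Matrix.mulVec_mulVec, Matrix.mul_nonsing_inv _ hdet, Matrix.one_mulVec]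
    have hcnn : ∀ i, 0 ≤ cf i := by
      intro i; rw [hcf]; dsimp only; split_ifs <;> linarith
    have hc0 : 0 < cf ⟨0, hn0⟩ := by
      rw [hcf]; dsimp only
      rw [if_pos rfl]
      split_ifs <;> linarith
    have hspos : ∀ i, 0 < s i := mulVec_pos hn0 ⟨hsym, htri, hneg, hpd⟩ hHs hcnn hc0
    set K : Fin (n+1) → ℝ := fun j =>
      if h0 : (j:ℕ) = 0 then α * s ⟨0, hn0⟩
      else if h1 : (j:ℕ) = n then β * s ⟨n-1, by omega⟩
      else -(s ⟨(j:ℕ)-1, by (have := j.isLt; omega)⟩ * s ⟨(j:ℕ), by (have := j.isLt; omega)⟩ *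
        H ⟨(j:ℕ)-1, by (have := j.isLt; omega)⟩ ⟨(j:ℕ), by (have := j.isLt; omega)⟩) with hKdef
    have hK0 : K 0 = α * s ⟨0, hn0⟩ := dif_pos rfl
    have hKn : K (Fin.last n) = β * s ⟨n-1, by omega⟩ :=
      (dif_neg (by simp; omega)).trans (dif_pos (by simp))
    have hKmid : ∀ (j : Fin (n+1)) (h0 : (j:ℕ) ≠ 0) (h1 : (j:ℕ) ≠ n),
        K j = -(s ⟨(j:ℕ)-1, by (have := j.isLt; omega)⟩ * s ⟨(j:ℕ), by (have := j.isLt; omega)⟩ *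
          H ⟨(j:ℕ)-1, by (have := j.isLt; omega)⟩ ⟨(j:ℕ), by (have := j.isLt; omega)⟩) := by
      intro j h0 h1
      exact (dif_neg h0).trans (dif_neg h1)
    have hKpos : ∀ j, 0 < K j := by
      intro j
      by_cases h0 : (j:ℕ) = 0
      · obtain rfl : j = 0 := Fin.ext (by simpa using h0)
        rw [hK0]; exact mul_pos hα (hspos _)
      · by_cases h1 : (j:ℕ) = n
        · obtain rfl : j = Fin.last n := Fin.ext (by simpa using h1)
          rw [hKn]; exact mul_pos hβ (hspos _)
        · rw [hKmid j h0 h1]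
          have hjlt : (j:ℕ) < n := by have := j.isLt; omega
          have hHneg : H ⟨(j:ℕ)-1, by omega⟩ ⟨(j:ℕ), hjlt⟩ < 0 :=
            hneg _ _ (Or.inl (by simp; omega))
          have hs1 := hspos ⟨(j:ℕ)-1, by omega⟩
          have hs2 := hspos ⟨(j:ℕ), hjlt⟩
          have hp := mul_neg_of_pos_of_neg (mul_pos hs1 hs2) hHneg
          linarith
    refine ⟨⟨fun i => (s i)^2, K⟩, ⟨?_, hKpos, ?_, ?_⟩, ?_⟩
    · intro i
      exact pow_pos (hspos i) 2
    · show K 0 / Real.sqrt ((s ⟨0, by omega⟩)^2) = α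
      rw [hK0, Real.sqrt_sq (hspos _).le, mul_div_assoc, div_self (hspos _).ne', mul_one]
    · show K (Fin.last n) / Real.sqrt ((s ⟨n-1, by omega⟩)^2) = β
      rw [hKn, Real.sqrt_sq (hspos _).le, mul_div_assoc, div_self (hspos _).ne', mul_one]
    · show assocH n (fun i => (s i)^2) K = H
      ext i j
      rw [assocH_apply]
      have hsqrt : ∀ i : Fin n, Real.sqrt ((fun i => (s i)^2) i) = s i :=
        fun i => Real.sqrt_sq (hspos i).le
      rw [hsqrt i, hsqrt j]
      have hstiff : stiffB n K i j = s i * H i j * s j := by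
        by_cases hij : (i:ℕ) = (j:ℕ)
        · obtain rfl : i = j := Fin.ext hij
          have hB : stiffB n K i i = K i.castSucc + K i.succ := by simp [stiffB]
          rw [hB]
          have hrow' : ∑ jj, H i jj * s jj = cf i := congrFun hHs i
          rw [tridiag_sum htri s i, hcf] at hrow'
          dsimp only at hrow'
          by_cases hi0 : (i:ℕ) = 0
          · have hc : K i.castSucc = α * s i := by
              have h1 : K i.castSucc = α * s ⟨0, hn0⟩ := dif_pos (by simpa using hi0)
              rw [h1, show (⟨0, hn0⟩ : Fin n) = i from Fin.ext (by simp [hi0])]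
            rw [dif_neg (by omega), if_pos hi0] at hrow'
            by_cases hi1 : (i:ℕ) = n-1
            · have hsucc : K i.succ = β * s i := by
                have h1 : K i.succ = β * s ⟨n-1, by omega⟩ :=
                  (dif_neg (by simp)).trans (dif_pos (by simp; omega))
                rw [h1, show (⟨n-1, by omega⟩ : Fin n) = i from Fin.ext (by simp; omega)]
              rw [dif_neg (by omega), if_pos hi1] at hrow'
              rw [hc, hsucc]
              linear_combination (-(s i)) * hrow'
            · have hi1' : (i:ℕ)+1 < n := by have := i.isLt; omega
              have hsucc : K i.succ = -(s i * s ⟨(i:ℕ)+1, hi1'⟩ * H i ⟨(i:ℕ)+1, hi1'⟩) :=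
                hKmid i.succ (by simp) (by simp; omega)
              rw [dif_pos hi1', if_neg hi1] at hrow'
              rw [hc, hsucc]
              linear_combination (-(s i)) * hrow'
          · have hi0' : 0 < (i:ℕ) := Nat.pos_of_ne_zero hi0
            have hprev : (i:ℕ)-1 < n := by have := i.isLt; omega
            have hc : K i.castSucc = -(s ⟨(i:ℕ)-1, hprev⟩ * s i * H ⟨(i:ℕ)-1, hprev⟩ i) :=
              hKmid i.castSucc (by simpa using hi0) (by simp; have := i.isLt; omega)
            have hsymm1 : H i ⟨(i:ℕ)-1, hprev⟩ = H ⟨(i:ℕ)-1, hprev⟩ i :=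
              congrFun (congrFun hsym ⟨(i:ℕ)-1, hprev⟩) i
            rw [dif_pos hi0', if_neg hi0, hsymm1] at hrow'
            by_cases hi1 : (i:ℕ) = n-1
            · have hsucc : K i.succ = β * s i := by
                have h1 : K i.succ = β * s ⟨n-1, by omega⟩ :=
                  (dif_neg (by simp)).trans (dif_pos (by simp; omega))
                rw [h1, show (⟨n-1, by omega⟩ : Fin n) = i from Fin.ext (by simp; omega)]
              rw [dif_neg (by omega), if_pos hi1] at hrow'
              rw [hc, hsucc]
              linear_combination (-(s i)) * hrow'
            · have hi1' : (i:ℕ)+1 < n := by have := i.isLt; omega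
              have hsucc : K i.succ = -(s i * s ⟨(i:ℕ)+1, hi1'⟩ * H i ⟨(i:ℕ)+1, hi1'⟩) :=
                hKmid i.succ (by simp) (by simp; omega)
              rw [dif_pos hi1', if_neg hi1] at hrow'
              rw [hc, hsucc]
              linear_combination (-(s i)) * hrow'
        · by_cases hadj1 : (i:ℕ)+1 = (j:ℕ)
          · have hB : stiffB n K i j = -K i.succ := by
              simp only [stiffB, Matrix.of_apply]
              rw [if_neg hij, if_pos hadj1]
            have hj1 : 0 < (j:ℕ) := by omega
            have hjprev : (j:ℕ)-1 < n := by have := j.isLt; omega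
            have hKcast : K i.succ = K j.castSucc :=
              congrArg K (Fin.ext (by simp [hadj1]))
            have h' : K j.castSucc = -(s ⟨(j:ℕ)-1, hjprev⟩ * s j * H ⟨(j:ℕ)-1, hjprev⟩ j) :=
              hKmid j.castSucc (by simp; omega) (by simp; have := j.isLt; omega)
            have hidx : (⟨(j:ℕ)-1, hjprev⟩ : Fin n) = i := Fin.ext (by simp; omega)
            rw [hidx] at h'
            rw [hB, hKcast, h']
            ring
          · by_cases hadj2 : (j:ℕ)+1 = (i:ℕ)
            · have hB : stiffB n K i j = -K j.succ := by
                simp only [stiffB, Matrix.of_apply]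
                rw [if_neg hij, if_neg hadj1, if_pos hadj2]
              have hiprev : (i:ℕ)-1 < n := by have := i.isLt; omega
              have hKcast : K j.succ = K i.castSucc :=
                congrArg K (Fin.ext (by simp; omega))
              have h' : K i.castSucc = -(s ⟨(i:ℕ)-1, hiprev⟩ * s i * H ⟨(i:ℕ)-1, hiprev⟩ i) :=
                hKmid i.castSucc (by simp; omega) (by simp; have := i.isLt; omega)
              have hidx : (⟨(i:ℕ)-1, hiprev⟩ : Fin n) = j := Fin.ext (by simp; omega)
              rw [hidx] at h'
              have hsymm2 : H j i = H i j := (congrFun (congrFun hsym j) i).symm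
              rw [hB, hKcast, h', hsymm2]
              ring
            · rw [stiffB_tridiag n K i j (by omega), htri i j (by omega)]
              ring
      rw [hstiff]
      have ai := (hspos i).ne'
      have aj := (hspos j).ne'
      field_simp
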